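/- Let ψ : ℝ^{α+2} → ℝ and φ : ℝ^{β+2} → ℝ be c-Lipschitz for the sup metric, t > 1, M ≥ 1. For l = 1, 2 let f^l be (t,M)-close to ψ and g^l be (t,M)-close to φ, and let (z_l(i,j), w_l(i,j)) be the rational state system for (f^l, g^l) with positive initial data (z_i(l))_i, (w^j(l))_j. Suppose ρ ≥ 1 satisfies z_i(1)/z_i(2) ≤ ρ, z_i(2)/z_i(1) ≤ ρ, w^j(1)/w^j(2) ≤ ρ and w^j(2)/w^j(1) ≤ ρ for all i, j. Then for all i, j ≥ 0: max(z_1(i,j+1)/z_2(i,j+1), z_2(i,j+1)/z_1(i,j+1), w_1(i+1,j)/w_2(i+1,j), w_2(i+1,j)/w_1(i+1,j)) ≤ M^{2·P_{i+j(γ+1)}(c)} · ρ^{c̃^{i+1+j(γ+1)}}. -/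

import Mathlib

def zidx (γ i : ℕ) : ℕ → ℕ
  | 0 => 0
  | j + 1 => i + j * (γ + 1) + 1

lemma zidx_le (γ i k : ℕ) (hk : k ≤ γ) : ∀ j, zidx γ (i + k) j ≤ i + j * (γ + 1)
  | 0 => Nat.zero_le _
  | j + 1 => by
    show i + k + j * (γ + 1) + 1 ≤ i + (j + 1) * (γ + 1)
    rw [Nat.add_mul, Nat.one_mul]
    generalize j * (γ + 1) = A
    omega

lemma step_aux {N : ℕ} (c m L : ℝ) (hc : 0 ≤ c)
    (Ψ : (Fin N → ℝ) → ℝ) (hΨ : ∀ v w, |Ψ v - Ψ w| ≤ c * dist v w)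
    (F1 F2 : (Fin N → ℝ) → ℝ)
    (h1 : ∀ v, (∀ k, 0 < v k) → |Real.log (F1 v) / L - Ψ (fun k => Real.log (v k) / L)| ≤ m)
    (h2 : ∀ v, (∀ k, 0 < v k) → |Real.log (F2 v) / L - Ψ (fun k => Real.log (v k) / L)| ≤ m)
    (v1 v2 : Fin N → ℝ) (hv1 : ∀ k, 0 < v1 k) (hv2 : ∀ k, 0 < v2 k)
    (A : ℝ) (hA : 0 ≤ A)
    (hAk : ∀ k, |Real.log (v1 k) / L - Real.log (v2 k) / L| ≤ A) :
    |Real.log (F1 v1) / L - Real.log (F2 v2) / L| ≤ 2 * m + c * A := by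
  have hd : dist (fun k => Real.log (v1 k) / L) (fun k => Real.log (v2 k) / L) ≤ A := by
    rw [dist_pi_le_iff hA]
    intro k
    rw [Real.dist_eq]
    exact hAk k
  have t1 := h1 v1 hv1
  have t2 := h2 v2 hv2
  have t3 := hΨ (fun k => Real.log (v1 k) / L) (fun k => Real.log (v2 k) / L)
  have t4 : c * dist (fun k => Real.log (v1 k) / L) (fun k => Real.log (v2 k) / L) ≤ c * A :=
    mul_le_mul_of_nonneg_left hd hc
  have e1 : |Real.log (F1 v1) / L - Real.log (F2 v2) / L| ≤
      |Real.log (F1 v1) / L - Ψ (fun k => Real.log (v1 k) / L)| +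
      |Ψ (fun k => Real.log (v1 k) / L) - Ψ (fun k => Real.log (v2 k) / L)| +
      |Ψ (fun k => Real.log (v2 k) / L) - Real.log (F2 v2) / L| := by
    calc |Real.log (F1 v1) / L - Real.log (F2 v2) / L|
        ≤ |Real.log (F1 v1) / L - Ψ (fun k => Real.log (v1 k) / L)| +
          |Ψ (fun k => Real.log (v1 k) / L) - Real.log (F2 v2) / L| := abs_sub_le _ _ _
      _ ≤ _ := by
          have := abs_sub_le (Ψ (fun k => Real.log (v1 k) / L))
            (Ψ (fun k => Real.log (v2 k) / L)) (Real.log (F2 v2) / L)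
          linarith
  have e2 : |Ψ (fun k => Real.log (v2 k) / L) - Real.log (F2 v2) / L| ≤ m := by
    rw [abs_sub_comm]; exact t2
  linarith


/-- comparison of two rational state systems whose defining functions are
`(t,M)`-close to the same `c`-Lipschitz pair `(ψ, φ)` (e.g. tropically equivalent
relatively elementary functions), with initial ratio at most `ρ`.
Here `γ = max α β`, `P_n(c) = ∑_{k=0}^n c^k`, `c̃ = max c 1`. -/
theorem statement9 (α β : ℕ) (c t M : ℝ) (hc : 0 ≤ c) (ht : 1 < t) (hM : 1 ≤ M)
    (ψ : (Fin (α + 2) → ℝ) → ℝ) (φ : (Fin (β + 2) → ℝ) → ℝ)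
    (hψ : ∀ v w : Fin (α + 2) → ℝ, |ψ v - ψ w| ≤ c * dist v w)
    (hφ : ∀ v w : Fin (β + 2) → ℝ, |φ v - φ w| ≤ c * dist v w)
    (f1 f2 : (Fin (α + 2) → ℝ) → ℝ) (g1 g2 : (Fin (β + 2) → ℝ) → ℝ)
    (hf1pos : ∀ v : Fin (α + 2) → ℝ, (∀ k, 0 < v k) → 0 < f1 v)
    (hf2pos : ∀ v : Fin (α + 2) → ℝ, (∀ k, 0 < v k) → 0 < f2 v)
    (hg1pos : ∀ v : Fin (β + 2) → ℝ, (∀ k, 0 < v k) → 0 < g1 v)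
    (hg2pos : ∀ v : Fin (β + 2) → ℝ, (∀ k, 0 < v k) → 0 < g2 v)
    (hf1 : ∀ v : Fin (α + 2) → ℝ, (∀ k, 0 < v k) →
      |Real.log (f1 v) / Real.log t - ψ (fun k => Real.log (v k) / Real.log t)|
        ≤ Real.log M / Real.log t)
    (hf2 : ∀ v : Fin (α + 2) → ℝ, (∀ k, 0 < v k) →
      |Real.log (f2 v) / Real.log t - ψ (fun k => Real.log (v k) / Real.log t)|
        ≤ Real.log M / Real.log t)
    (hg1 : ∀ v : Fin (β + 2) → ℝ, (∀ k, 0 < v k) →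
      |Real.log (g1 v) / Real.log t - φ (fun k => Real.log (v k) / Real.log t)|
        ≤ Real.log M / Real.log t)
    (hg2 : ∀ v : Fin (β + 2) → ℝ, (∀ k, 0 < v k) →
      |Real.log (g2 v) / Real.log t - φ (fun k => Real.log (v k) / Real.log t)|
        ≤ Real.log M / Real.log t)
    (z1 z2 w1 w2 : ℕ → ℕ → ℝ)
    (hz1pos : ∀ i, 0 < z1 i 0) (hz2pos : ∀ i, 0 < z2 i 0)
    (hw1pos : ∀ j, 0 < w1 0 j) (hw2pos : ∀ j, 0 < w2 0 j)
    (hz1 : ∀ i j, z1 i (j + 1) = f1 (Fin.cons (w1 i j) (fun k : Fin (α + 1) => z1 (i + (k : ℕ)) j)))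
    (hw1 : ∀ i j, w1 (i + 1) j = g1 (Fin.cons (w1 i j) (fun k : Fin (β + 1) => z1 (i + (k : ℕ)) j)))
    (hz2 : ∀ i j, z2 i (j + 1) = f2 (Fin.cons (w2 i j) (fun k : Fin (α + 1) => z2 (i + (k : ℕ)) j)))
    (hw2 : ∀ i j, w2 (i + 1) j = g2 (Fin.cons (w2 i j) (fun k : Fin (β + 1) => z2 (i + (k : ℕ)) j)))
    (ρ : ℝ) (hρ : 1 ≤ ρ)
    (hρz : ∀ i, z1 i 0 / z2 i 0 ≤ ρ ∧ z2 i 0 / z1 i 0 ≤ ρ)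
    (hρw : ∀ j, w1 0 j / w2 0 j ≤ ρ ∧ w2 0 j / w1 0 j ≤ ρ) :
    ∀ i j : ℕ,
      max (max (z1 i (j + 1) / z2 i (j + 1)) (z2 i (j + 1) / z1 i (j + 1)))
          (max (w1 (i + 1) j / w2 (i + 1) j) (w2 (i + 1) j / w1 (i + 1) j))
        ≤ M ^ (2 * ∑ k ∈ Finset.range (i + j * (max α β + 1) + 1), c ^ k)
          * ρ ^ ((max c 1) ^ (i + 1 + j * (max α β + 1))) := by
  intro i j
  have hM0 : (0:ℝ) < M := lt_of_lt_of_le one_pos hM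
  have hρ0 : (0:ℝ) < ρ := lt_of_lt_of_le one_pos hρ
  have hL : 0 < Real.log t := Real.log_pos ht
  set L := Real.log t with hLdef
  set m := Real.log M / L with hmdef
  set r := Real.log ρ / L with hrdef
  have hm0 : 0 ≤ m := div_nonneg (Real.log_nonneg hM) hL.le
  have hr0 : 0 ≤ r := div_nonneg (Real.log_nonneg hρ) hL.le
  have hc1 : (1:ℝ) ≤ max c 1 := le_max_right _ _
  set γ := max α β with hγdef
  have hαγ : α ≤ γ := le_max_left _ _
  have hβγ : β ≤ γ := le_max_right _ _
  set F : ℕ → ℝ := fun n => 2 * (∑ k ∈ Finset.range n, c ^ k) * m + (max c 1) ^ n * r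
    with hFdef
  have hF0 : F 0 = r := by simp [hFdef]
  have hFnonneg : ∀ n, 0 ≤ F n := by
    intro n
    apply add_nonneg
    · exact mul_nonneg (mul_nonneg (by norm_num)
        (Finset.sum_nonneg fun k _ => pow_nonneg hc k)) hm0
    · exact mul_nonneg (pow_nonneg (le_trans zero_le_one hc1) n) hr0
  have hFmono : Monotone F := by
    apply monotone_nat_of_le_succ
    intro n
    simp only [hFdef]
    have h1 : (∑ k ∈ Finset.range n, c ^ k) ≤ ∑ k ∈ Finset.range (n + 1), c ^ k := by
      apply Finset.sum_le_sum_of_subset_of_nonneg (Finset.range_subset_range.mpr (Nat.le_succ n))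
      intro k _ _
      exact pow_nonneg hc k
    have h2 : (max c 1) ^ n ≤ (max c 1) ^ (n + 1) := pow_le_pow_right₀ hc1 (Nat.le_succ n)
    have := mul_le_mul_of_nonneg_right h2 hr0
    nlinarith
  have hFstep : ∀ n, 2 * m + c * F n ≤ F (n + 1) := by
    intro n
    simp only [hFdef]
    have hgeom : (∑ k ∈ Finset.range (n + 1), c ^ k) = 1 + c * ∑ k ∈ Finset.range n, c ^ k := by
      rw [Finset.sum_range_succ' (fun k => c ^ k) n, Finset.mul_sum]
      simp [pow_succ, mul_comm, add_comm]
    have hpow : c * (max c 1) ^ n ≤ (max c 1) ^ (n + 1) := by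
      rw [pow_succ, mul_comm]
      exact mul_le_mul_of_nonneg_left (le_max_left c 1)
        (pow_nonneg (le_trans zero_le_one hc1) n)
    have := mul_le_mul_of_nonneg_right hpow hr0
    rw [hgeom]
    ring_nf
    rw [pow_succ] at this
    nlinarith
  -- positivity of all states
  have consPos : ∀ {n : ℕ} (a : ℝ) (b : Fin (n + 1) → ℝ), 0 < a → (∀ k, 0 < b k) →
      ∀ k : Fin (n + 2), 0 < (Fin.cons a b : Fin (n + 2) → ℝ) k := by
    intro n a b ha hb k
    refine Fin.cases ?_ ?_ k
    · simpa using ha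
    · intro k'
      simpa using hb k'
  have hp1 : ∀ j, (∀ i, 0 < z1 i j) ∧ (∀ i, 0 < w1 i j) := by
    intro j
    induction j with
    | zero =>
      refine ⟨hz1pos, ?_⟩
      intro i
      induction i with
      | zero => exact hw1pos 0
      | succ i ih =>
        rw [hw1]
        exact hg1pos _ (consPos _ _ ih fun k => hz1pos _)
    | succ j ih =>
      have hzrow : ∀ i, 0 < z1 i (j + 1) := by
        intro i
        rw [hz1]
        exact hf1pos _ (consPos _ _ (ih.2 i) fun k => ih.1 _)
      refine ⟨hzrow, ?_⟩
      intro i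
      induction i with
      | zero => exact hw1pos (j + 1)
      | succ i ihw =>
        rw [hw1]
        exact hg1pos _ (consPos _ _ ihw fun k => hzrow _)
  have hp2 : ∀ j, (∀ i, 0 < z2 i j) ∧ (∀ i, 0 < w2 i j) := by
    intro j
    induction j with
    | zero =>
      refine ⟨hz2pos, ?_⟩
      intro i
      induction i with
      | zero => exact hw2pos 0
      | succ i ih =>
        rw [hw2]
        exact hg2pos _ (consPos _ _ ih fun k => hz2pos _)
    | succ j ih =>
      have hzrow : ∀ i, 0 < z2 i (j + 1) := by
        intro i
        rw [hz2]
        exact hf2pos _ (consPos _ _ (ih.2 i) fun k => ih.1 _)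
      refine ⟨hzrow, ?_⟩
      intro i
      induction i with
      | zero => exact hw2pos (j + 1)
      | succ i ihw =>
        rw [hw2]
        exact hg2pos _ (consPos _ _ ihw fun k => hzrow _)
  -- initial data bounds in log scale
  have ratlog : ∀ a b : ℝ, 0 < a → 0 < b → a / b ≤ ρ → b / a ≤ ρ →
      |Real.log a / L - Real.log b / L| ≤ r := by
    intro a b ha hb h1 h2
    have h1' : Real.log a - Real.log b ≤ Real.log ρ := by
      rw [← Real.log_div ha.ne' hb.ne']
      exact Real.log_le_log (div_pos ha hb) h1
    have h2' : Real.log b - Real.log a ≤ Real.log ρ := by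
      rw [← Real.log_div hb.ne' ha.ne']
      exact Real.log_le_log (div_pos hb ha) h2
    rw [div_sub_div_same, hrdef, abs_div, abs_of_pos hL]
    gcongr
    rw [abs_le]
    constructor
    · linarith
    · exact h1'
  -- key comparison estimates
  have wstep : ∀ j, (∀ i', |Real.log (z1 i' j) / L - Real.log (z2 i' j) / L| ≤ F (zidx γ i' j)) →
      ∀ i', |Real.log (w1 i' j) / L - Real.log (w2 i' j) / L| ≤ F (i' + j * (γ + 1)) := by
    intro j hZ i'
    induction i' with
    | zero =>
      refine le_trans ?_ (hFmono (Nat.zero_le (0 + j * (γ + 1))))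
      rw [hF0]
      exact ratlog _ _ ((hp1 j).2 0) ((hp2 j).2 0) (hρw j).1 (hρw j).2
    | succ i' ih =>
      have hidx : i' + 1 + j * (γ + 1) = (i' + j * (γ + 1)) + 1 := by ring
      rw [hidx, hw1, hw2]
      have hcomp : ∀ k : Fin (β + 2),
          |Real.log ((Fin.cons (w1 i' j) (fun k : Fin (β + 1) => z1 (i' + (k : ℕ)) j) : Fin (β + 2) → ℝ) k) / L -
           Real.log ((Fin.cons (w2 i' j) (fun k : Fin (β + 1) => z2 (i' + (k : ℕ)) j) : Fin (β + 2) → ℝ) k) / L| ≤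
          F (i' + j * (γ + 1)) := by
        intro k
        refine Fin.cases ?_ ?_ k
        · simpa using ih
        · intro k'
          simp only [Fin.cons_succ]
          refine le_trans (hZ (i' + (k' : ℕ))) (hFmono ?_)
          exact zidx_le γ i' (k' : ℕ) (le_trans (Nat.le_of_lt_succ k'.isLt) hβγ) j
      refine le_trans (step_aux c m L hc φ hφ g1 g2 hg1 hg2 _ _
        (consPos _ _ ((hp1 j).2 i') fun k => (hp1 j).1 _)
        (consPos _ _ ((hp2 j).2 i') fun k => (hp2 j).1 _)
        (F (i' + j * (γ + 1))) (hFnonneg _) hcomp) (hFstep _)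
  have keyZ : ∀ j i', |Real.log (z1 i' j) / L - Real.log (z2 i' j) / L| ≤ F (zidx γ i' j) := by
    intro j
    induction j with
    | zero =>
      intro i'
      show _ ≤ F 0
      rw [hF0]
      exact ratlog _ _ (hz1pos i') (hz2pos i') (hρz i').1 (hρz i').2
    | succ j ih =>
      intro i'
      have hW := wstep j ih
      show _ ≤ F (i' + j * (γ + 1) + 1)
      rw [hz1, hz2]
      have hcomp : ∀ k : Fin (α + 2),
          |Real.log ((Fin.cons (w1 i' j) (fun k : Fin (α + 1) => z1 (i' + (k : ℕ)) j) : Fin (α + 2) → ℝ) k) / L -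
           Real.log ((Fin.cons (w2 i' j) (fun k : Fin (α + 1) => z2 (i' + (k : ℕ)) j) : Fin (α + 2) → ℝ) k) / L| ≤
          F (i' + j * (γ + 1)) := by
        intro k
        refine Fin.cases ?_ ?_ k
        · simpa using hW i'
        · intro k'
          simp only [Fin.cons_succ]
          refine le_trans (ih (i' + (k' : ℕ))) (hFmono ?_)
          exact zidx_le γ i' (k' : ℕ) (le_trans (Nat.le_of_lt_succ k'.isLt) hαγ) j
      refine le_trans (step_aux c m L hc ψ hψ f1 f2 hf1 hf2 _ _
        (consPos _ _ ((hp1 j).2 i') fun k => (hp1 j).1 _)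
        (consPos _ _ ((hp2 j).2 i') fun k => (hp2 j).1 _)
        (F (i' + j * (γ + 1))) (hFnonneg _) hcomp) (hFstep _)
  have keyW : ∀ j i', |Real.log (w1 i' j) / L - Real.log (w2 i' j) / L| ≤ F (i' + j * (γ + 1)) :=
    fun j => wstep j (keyZ j)
  -- conclusion
  set n := i + j * (γ + 1) with hn
  have hRpos : 0 < M ^ (2 * ∑ k ∈ Finset.range (n + 1), c ^ k) *
      ρ ^ ((max c 1) ^ (i + 1 + j * (γ + 1))) :=
    mul_pos (Real.rpow_pos_of_pos hM0 _) (Real.rpow_pos_of_pos hρ0 _)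
  have hexp : i + 1 + j * (γ + 1) = n + 1 := by rw [hn]; ring
  have hlogR : Real.log (M ^ (2 * ∑ k ∈ Finset.range (n + 1), c ^ k) *
      ρ ^ ((max c 1) ^ (i + 1 + j * (γ + 1)))) = L * F (n + 1) := by
    rw [Real.log_mul (Real.rpow_pos_of_pos hM0 _).ne' (Real.rpow_pos_of_pos hρ0 _).ne',
      Real.log_rpow hM0, Real.log_rpow hρ0, hexp]
    simp only [hFdef]
    have hLm : m * L = Real.log M := by rw [hmdef]; exact div_mul_cancel₀ _ hL.ne'
    have hLr : r * L = Real.log ρ := by rw [hrdef]; exact div_mul_cancel₀ _ hL.ne'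
    rw [← hLm, ← hLr]
    ring
  have ratio_of_log : ∀ a b : ℝ, 0 < a → 0 < b →
      Real.log a - Real.log b ≤ L * F (n + 1) →
      a / b ≤ M ^ (2 * ∑ k ∈ Finset.range (n + 1), c ^ k) *
        ρ ^ ((max c 1) ^ (i + 1 + j * (γ + 1))) := by
    intro a b ha hb h
    calc a / b = Real.exp (Real.log (a / b)) := (Real.exp_log (div_pos ha hb)).symm
      _ ≤ Real.exp (Real.log (M ^ (2 * ∑ k ∈ Finset.range (n + 1), c ^ k) *
          ρ ^ ((max c 1) ^ (i + 1 + j * (γ + 1))))) := by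
          apply Real.exp_le_exp.mpr
          rw [Real.log_div ha.ne' hb.ne', hlogR]
          exact h
      _ = _ := Real.exp_log hRpos
  have toLF : ∀ a b : ℝ, |Real.log a / L - Real.log b / L| ≤ F (n + 1) →
      Real.log a - Real.log b ≤ L * F (n + 1) := by
    intro a b h
    have h' := (abs_le.mp h).2
    rw [div_sub_div_same] at h'
    calc Real.log a - Real.log b = (Real.log a - Real.log b) / L * L :=
        (div_mul_cancel₀ _ hL.ne').symm
      _ ≤ F (n + 1) * L := mul_le_mul_of_nonneg_right h' hL.le
      _ = L * F (n + 1) := mul_comm _ _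
  have hZfin : |Real.log (z1 i (j + 1)) / L - Real.log (z2 i (j + 1)) / L| ≤ F (n + 1) :=
    keyZ (j + 1) i
  have hWfin : |Real.log (w1 (i + 1) j) / L - Real.log (w2 (i + 1) j) / L| ≤ F (n + 1) := by
    have := keyW j (i + 1)
    have e : i + 1 + j * (γ + 1) = n + 1 := hexp
    rwa [e] at this
  have habs : ∀ a b : ℝ, |a - b| ≤ F (n + 1) → |b - a| ≤ F (n + 1) := by
    intro a b h
    rwa [abs_sub_comm]
  refine max_le (max_le ?_ ?_) (max_le ?_ ?_)
  · exact ratio_of_log _ _ ((hp1 (j + 1)).1 i) ((hp2 (j + 1)).1 i) (toLF _ _ hZfin)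
  · exact ratio_of_log _ _ ((hp2 (j + 1)).1 i) ((hp1 (j + 1)).1 i) (toLF _ _ (habs _ _ hZfin))
  · exact ratio_of_log _ _ ((hp1 j).2 (i + 1)) ((hp2 j).2 (i + 1)) (toLF _ _ hWfin)
  · exact ratio_of_log _ _ ((hp2 j).2 (i + 1)) ((hp1 j).2 (i + 1)) (toLF _ _ (habs _ _ hWfin))
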